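/- Let |X| = n ≥ 3 and let T be a tree on X whose only proper cluster is X \ {a} for some a ∈ X. Then the number of trees in the down-neighbourhood of T (trees T'' such that T is a binding of T'') equals the Stirling number of the second kind S(n−1, 2) = 2^{n−2} − 1, and this is the maximum down-neighbourhood size among all trees in RP(X). -/

import Mathlib

open Finset

variable {X : Type*} [DecidableEq X] [Fintype X]

/-- A hierarchy on a finite set `X`: a collection of subsets of `X` containing `X`
and all singletons, whose members are nonempty and pairwise disjoint or nested. -/
def IsHierarchy (H : Finset (Finset X)) : Prop :=
  (Finset.univ ∈ H) ∧ (∀ x : X, {x} ∈ H) ∧ (∀ A ∈ H, A.Nonempty) ∧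
    ∀ A ∈ H, ∀ B ∈ H, A ∩ B = ∅ ∨ A ⊆ B ∨ B ⊆ A

/-- A hierarchy-preserving map from `H` to `H'`: fixes singletons, is enveloping and
subset-preserving. -/
def IsHPMap (H H' : Finset (Finset X)) (δ : Finset X → Finset X) : Prop :=
  (∀ A ∈ H, δ A ∈ H') ∧ (∀ x : X, δ {x} = {x}) ∧
    (∀ A ∈ H, A ⊆ δ A) ∧ ∀ A ∈ H, ∀ B ∈ H, A ⊂ B → δ A ⊂ δ B

/-- `T ≤_HP T'`: there exists a hierarchy-preserving map from `H(T)` to `H(T')`. -/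
def LeHP (H H' : Finset (Finset X)) : Prop :=
  ∃ δ : Finset X → Finset X, IsHPMap H H' δ

/-- `A` is an inclusion-maximal (proper) subcluster of `D` in `H`. -/
def IsMaxSub (H : Finset (Finset X)) (A D : Finset X) : Prop :=
  A ∈ H ∧ D ∈ H ∧ A ⊂ D ∧ ∀ C ∈ H, ¬(A ⊂ C ∧ C ⊂ D)

/-- The binding of `H` at `A ∪ B`: delete the non-singleton members of `{A, B}` and
add `A ∪ B`. -/
def binding (H : Finset (Finset X)) (A B : Finset X) : Finset (Finset X) :=
  (H.filter fun C => ¬((C = A ∨ C = B) ∧ 1 < C.card)) ∪ {A ∪ B}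

/-- The proper clusters of a hierarchy: members that are neither `X` nor singletons. -/
def properClusters (H : Finset (Finset X)) : Finset (Finset X) :=
  H.filter fun A => A ≠ Finset.univ ∧ 1 < A.card

/-- The rank of a tree/hierarchy: `f(T) = ∑_{A ∈ P(T)} (|A| - 1)`. -/
def rankHP (H : Finset (Finset X)) : ℕ :=
  ∑ A ∈ properClusters H, (A.card - 1)

/-- `T'` covers `T` in the partial order `≤_HP`. -/
def CoversHP (H H' : Finset (Finset X)) : Prop :=
  LeHP H H' ∧ H ≠ H' ∧
    ∀ H'' : Finset (Finset X), IsHierarchy H'' → LeHP H H'' → LeHP H'' H' → H'' = H ∨ H'' = H'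

/-- Adjacency in the Hasse diagram of `≤_HP` on hierarchies. -/
def HasseAdj (H H' : Finset (Finset X)) : Prop :=
  IsHierarchy H ∧ IsHierarchy H' ∧ (CoversHP H H' ∨ CoversHP H' H)

/-- There is a walk of length `n` between `H` and `H'` in the Hasse diagram. -/
def HasPathHP (H H' : Finset (Finset X)) (n : ℕ) : Prop :=
  ∃ c : ℕ → Finset (Finset X), c 0 = H ∧ c n = H' ∧ ∀ i < n, HasseAdj (c i) (c (i + 1))

/-- `d` is the geodesic distance between `H` and `H'` in the Hasse diagram of `≤_HP`. -/
def DistHP (H H' : Finset (Finset X)) (d : ℕ) : Prop :=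
  HasPathHP H H' d ∧ ∀ m : ℕ, HasPathHP H H' m → d ≤ m

/-- The down-neighbourhood of `T`: the hierarchies covered by `T` in the Hasse diagram. -/
def downNbhd (H : Finset (Finset X)) : Set (Finset (Finset X)) :=
  {H'' | IsHierarchy H'' ∧ CoversHP H'' H}

attribute [local instance] Classical.propDecidable

namespace HPAux

variable {X : Type*} [DecidableEq X] [Fintype X]

theorem lam {H : Finset (Finset X)} (hH : IsHierarchy H) {A B : Finset X}
    (hA : A ∈ H) (hB : B ∈ H) (hne : (A ∩ B).Nonempty) : A ⊆ B ∨ B ⊆ A := by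
  rcases hH.2.2.2 A hA B hB with h | h | h
  · rw [h] at hne; exact absurd rfl hne.ne_empty
  · exact Or.inl h
  · exact Or.inr h

theorem mem_nonempty {H : Finset (Finset X)} (hH : IsHierarchy H) {A : Finset X}
    (hA : A ∈ H) : A.Nonempty := hH.2.2.1 A hA

/-- every proper subcluster is contained in a maximal one -/
theorem exists_maxsub {H : Finset (Finset X)} {C Z : Finset X}
    (hZ : Z ∈ H) (hC : C ∈ H) (hCZ : C ⊂ Z) : ∃ Y, IsMaxSub H Y Z ∧ C ⊆ Y := by
  classical
  set s := H.filter (fun Y => C ⊆ Y ∧ Y ⊂ Z) with hs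
  have hCs : C ∈ s := by simp [hs, hC, hCZ]
  obtain ⟨Y, hYs, hmax⟩ := s.exists_max_image (fun Y => Y.card) ⟨C, hCs⟩
  simp only [hs, Finset.mem_filter] at hYs
  refine ⟨Y, ⟨hYs.1, hZ, hYs.2.2, ?_⟩, hYs.2.1⟩
  intro C' hC' hC'2
  obtain ⟨h1, h2⟩ := hC'2
  have hC's : C' ∈ s := by
    simp only [hs, Finset.mem_filter]
    exact ⟨hC', hYs.2.1.trans h1.subset, h2⟩
  have := hmax C' hC's
  exact absurd (Finset.card_lt_card h1) (by omega)

theorem singleton_ssubset {Z : Finset X} (hcard : 2 ≤ Z.card) {x : X} (hx : x ∈ Z) :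
    ({x} : Finset X) ⊂ Z := by
  refine Finset.ssubset_iff_subset_ne.2 ⟨Finset.singleton_subset_iff.2 hx, ?_⟩
  intro h
  rw [← h] at hcard
  simp at hcard

theorem exists_maxsub_elt {H : Finset (Finset X)} (hH : IsHierarchy H) {Z : Finset X}
    (hZ : Z ∈ H) (hcard : 2 ≤ Z.card) {x : X} (hx : x ∈ Z) :
    ∃ Y, IsMaxSub H Y Z ∧ x ∈ Y := by
  obtain ⟨Y, hY, hsub⟩ := exists_maxsub hZ (hH.2.1 x) (singleton_ssubset hcard hx)
  exact ⟨Y, hY, hsub (Finset.mem_singleton_self x)⟩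

theorem maxsub_disjoint {H : Finset (Finset X)} (hH : IsHierarchy H) {Z Y₁ Y₂ : Finset X}
    (h1 : IsMaxSub H Y₁ Z) (h2 : IsMaxSub H Y₂ Z) (hne : Y₁ ≠ Y₂) : Y₁ ∩ Y₂ = ∅ := by
  by_contra h
  have hne' : (Y₁ ∩ Y₂).Nonempty := Finset.nonempty_iff_ne_empty.2 h
  rcases lam hH h1.1 h2.1 hne' with hsub | hsub
  · exact h1.2.2.2 Y₂ h2.1 ⟨(Finset.ssubset_iff_subset_ne.2 ⟨hsub, hne⟩), h2.2.2.1⟩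
  · exact h2.2.2.2 Y₁ h1.1 ⟨(Finset.ssubset_iff_subset_ne.2 ⟨hsub, hne.symm⟩), h1.2.2.1⟩


/-- δ of univ is univ -/
theorem delta_univ {H H' : Finset (Finset X)} {δ : Finset X → Finset X}
    (hδ : IsHPMap H H' δ) (hu : Finset.univ ∈ H) : δ Finset.univ = Finset.univ :=
  Finset.univ_subset_iff.1 (hδ.2.2.1 _ hu)

/-- a cluster strictly below univ maps strictly below univ -/
theorem delta_ne_univ {H H' : Finset (Finset X)} {δ : Finset X → Finset X}
    (hδ : IsHPMap H H' δ) (hu : Finset.univ ∈ H) {A : Finset X} (hA : A ∈ H)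
    (hAu : A ≠ Finset.univ) : δ A ≠ Finset.univ := by
  have : A ⊂ Finset.univ := Finset.ssubset_iff_subset_ne.2 ⟨Finset.subset_univ A, hAu⟩
  have := hδ.2.2.2 A hA Finset.univ hu this
  rw [delta_univ hδ hu] at this
  exact this.ne

end HPAux
namespace HPAux
set_option linter.unusedSectionVars false

variable {X : Type*} [DecidableEq X] [Fintype X]

/-- structure: a hierarchy is determined by its proper clusters -/
theorem hierarchy_structure {G : Finset (Finset X)} (hG : IsHierarchy G) :
    G = insert Finset.univ ((Finset.univ.image fun x => ({x} : Finset X)) ∪ properClusters G) := by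
  ext A
  simp only [Finset.mem_insert, Finset.mem_union, Finset.mem_image, properClusters,
    Finset.mem_filter]
  constructor
  · intro hA
    by_cases hu : A = Finset.univ
    · exact Or.inl hu
    by_cases hc : 1 < A.card
    · exact Or.inr (Or.inr ⟨hA, hu, hc⟩)
    · have h1 : A.card = 1 := by
        have := Finset.card_pos.2 (mem_nonempty hG hA); omega
      obtain ⟨x, hx⟩ := Finset.card_eq_one.1 h1
      exact Or.inr (Or.inl ⟨x, Finset.mem_univ x, hx.symm⟩)
  · rintro (rfl | ⟨x, _, rfl⟩ | ⟨hA, _⟩)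
    · exact hG.1
    · exact hG.2.1 x
    · exact hA

theorem hierarchy_ext {G₁ G₂ : Finset (Finset X)} (h1 : IsHierarchy G₁) (h2 : IsHierarchy G₂)
    (hp : properClusters G₁ = properClusters G₂) : G₁ = G₂ := by
  rw [hierarchy_structure h1, hierarchy_structure h2, hp]

theorem mem_of_properClusters {G : Finset (Finset X)} {A : Finset X}
    (h : A ∈ properClusters G) : A ∈ G := (Finset.mem_filter.1 h).1

theorem properClusters_spec {G : Finset (Finset X)} {A : Finset X} :
    A ∈ properClusters G ↔ A ∈ G ∧ A ≠ Finset.univ ∧ 1 < A.card := Finset.mem_filter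

/-- the children of Z -/
noncomputable def childrenF (H : Finset (Finset X)) (Z : Finset X) : Finset (Finset X) :=
  @Finset.filter _ (fun Y => IsMaxSub H Y Z) (Classical.decPred _) H

theorem mem_childrenF {H : Finset (Finset X)} {Z Y : Finset X} :
    Y ∈ childrenF H Z ↔ IsMaxSub H Y Z := by
  simp only [childrenF, Finset.mem_filter]
  exact ⟨fun h => h.2, fun h => ⟨h.1, h⟩⟩

theorem childrenF_nonempty {H : Finset (Finset X)} (hH : IsHierarchy H) {Z : Finset X}
    (hZ : Z ∈ H) (hcard : 2 ≤ Z.card) : (childrenF H Z).Nonempty := by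
  obtain ⟨x, hx⟩ := Finset.card_pos.1 (by omega : 0 < Z.card)
  obtain ⟨Y, hY, _⟩ := exists_maxsub_elt hH hZ hcard hx
  exact ⟨Y, mem_childrenF.2 hY⟩

/-- coverage: every element of Z lies in a child -/
theorem exists_child_elt {H : Finset (Finset X)} (hH : IsHierarchy H) {Z : Finset X}
    (hZ : Z ∈ H) (hcard : 2 ≤ Z.card) {x : X} (hx : x ∈ Z) :
    ∃ Y ∈ childrenF H Z, x ∈ Y := by
  obtain ⟨Y, hY, hxY⟩ := exists_maxsub_elt hH hZ hcard hx
  exact ⟨Y, mem_childrenF.2 hY, hxY⟩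

/-- each non-univ cluster has a unique parent (as a child of it) -/
theorem exists_unique_parent {H : Finset (Finset X)} (hH : IsHierarchy H) {A : Finset X}
    (hA : A ∈ H) (hAu : A ≠ Finset.univ) : ∃! Z, Z ∈ H ∧ IsMaxSub H A Z := by
  classical
  set s := H.filter (fun Z => A ⊂ Z) with hs
  have hus : Finset.univ ∈ s := by
    simp [hs, hH.1, Finset.ssubset_iff_subset_ne.2 ⟨Finset.subset_univ A, hAu⟩]
  obtain ⟨Z, hZs, hmin⟩ := s.exists_min_image (fun Z => Z.card) ⟨_, hus⟩
  simp only [hs, Finset.mem_filter] at hZs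
  refine ⟨Z, ⟨hZs.1, hA, hZs.1, hZs.2, ?_⟩, ?_⟩
  · intro C hC h
    have hCs : C ∈ s := by simp [hs, hC, h.1]
    have := hmin C hCs
    exact absurd (Finset.card_lt_card h.2) (by omega)
  · rintro Z' ⟨hZ', hmax'⟩
    by_contra hne
    have hint : (Z' ∩ Z).Nonempty := by
      obtain ⟨x, hx⟩ := mem_nonempty hH hA
      exact ⟨x, Finset.mem_inter.2 ⟨hmax'.2.2.1.subset hx, hZs.2.subset hx⟩⟩
    have hmaxZ : ∀ C ∈ H, ¬(A ⊂ C ∧ C ⊂ Z) := by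
      intro C hC h
      have hCs : C ∈ s := by simp [hs, hC, h.1]
      have := hmin C hCs
      exact absurd (Finset.card_lt_card h.2) (by omega)
    rcases lam hH hZ' hZs.1 hint with hsub | hsub
    · exact hmaxZ Z' hZ' ⟨hmax'.2.2.1, Finset.ssubset_iff_subset_ne.2 ⟨hsub, hne⟩⟩
    · exact hmax'.2.2.2 Z hZs.1 ⟨hZs.2, Finset.ssubset_iff_subset_ne.2 ⟨hsub, fun h => hne h.symm⟩⟩

end HPAux
namespace HPAux
set_option linter.unusedSectionVars false

variable {X : Type*} [DecidableEq X] [Fintype X]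

theorem erase_univ_eq_biUnion {H : Finset (Finset X)} (hH : IsHierarchy H) :
    H.erase Finset.univ =
      (H.filter (fun Z => 2 ≤ Z.card)).biUnion (childrenF H) := by
  classical
  ext A
  simp only [Finset.mem_erase, Finset.mem_biUnion, Finset.mem_filter, mem_childrenF]
  constructor
  · rintro ⟨hAu, hA⟩
    obtain ⟨Z, ⟨hZH, hmax⟩, _⟩ := exists_unique_parent hH hA hAu
    refine ⟨Z, ⟨hZH, ?_⟩, hmax⟩
    have h1 : 1 ≤ A.card := Finset.card_pos.2 (mem_nonempty hH hA)
    have h2 := Finset.card_lt_card hmax.2.2.1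
    omega
  · rintro ⟨Z, ⟨hZH, _⟩, hmax⟩
    refine ⟨?_, hmax.1⟩
    intro h
    subst h
    exact (hmax.2.2.1.trans_subset (Finset.subset_univ Z)).ne rfl

theorem sum_children_card {H : Finset (Finset X)} (hH : IsHierarchy H) :
    ∑ Z ∈ H.filter (fun Z => 2 ≤ Z.card), (childrenF H Z).card = H.card - 1 := by
  classical
  have hdisj : ∀ Z₁ ∈ H.filter (fun Z => 2 ≤ Z.card), ∀ Z₂ ∈ H.filter (fun Z => 2 ≤ Z.card),
      Z₁ ≠ Z₂ → Disjoint (childrenF H Z₁) (childrenF H Z₂) := by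
    intro Z₁ h1 Z₂ h2 hne
    rw [Finset.disjoint_left]
    intro A hA1 hA2
    rw [mem_childrenF] at hA1 hA2
    obtain ⟨Z, _, huniq⟩ := exists_unique_parent hH hA1.1
      (by
        intro h; subst h
        exact (hA1.2.2.1.trans_subset (Finset.subset_univ Z₁)).ne rfl)
    have e1 := huniq Z₁ ⟨hA1.2.1, hA1⟩
    have e2 := huniq Z₂ ⟨hA2.2.1, hA2⟩
    exact hne (e1.trans e2.symm)
  rw [← Finset.card_biUnion hdisj, ← erase_univ_eq_biUnion hH,
    Finset.card_erase_of_mem hH.1]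

theorem filter_two_le {H : Finset (Finset X)} (hH : IsHierarchy H)
    (hn : 2 ≤ Fintype.card X) :
    H.filter (fun Z => 2 ≤ Z.card) = insert Finset.univ (properClusters H) := by
  classical
  ext Z
  simp only [Finset.mem_filter, Finset.mem_insert, properClusters_spec]
  constructor
  · rintro ⟨hZ, hc⟩
    by_cases h : Z = Finset.univ
    · exact Or.inl h
    · exact Or.inr ⟨hZ, h, hc⟩
  · rintro (rfl | ⟨hZ, _, hc⟩)
    · simpa [Finset.card_univ] using ⟨hH.1, hn⟩
    · exact ⟨hZ, hc⟩

theorem card_hierarchy {H : Finset (Finset X)} (hH : IsHierarchy H)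
    (hn : 2 ≤ Fintype.card X) :
    H.card = Fintype.card X + 1 + (properClusters H).card := by
  classical
  have hs := hierarchy_structure hH
  have himcard : (Finset.univ.image fun x => ({x} : Finset X)).card = Fintype.card X := by
    rw [Finset.card_image_of_injective _ (fun a b h => by
      simpa using h : Function.Injective fun x : X => ({x} : Finset X))]
    exact Finset.card_univ
  have hdisj : Disjoint (Finset.univ.image fun x => ({x} : Finset X)) (properClusters H) := by
    rw [Finset.disjoint_left]
    rintro A hA hA2
    simp only [Finset.mem_image] at hA
    obtain ⟨x, _, rfl⟩ := hA
    have := (properClusters_spec.1 hA2).2.2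
    simp at this
  have hnotmem : Finset.univ ∉ (Finset.univ.image fun x => ({x} : Finset X)) ∪ properClusters H := by
    simp only [Finset.mem_union, Finset.mem_image]
    rintro (⟨x, _, hx⟩ | h)
    · have : (Finset.univ : Finset X).card = 1 := by rw [← hx]; simp
      rw [Finset.card_univ] at this; omega
    · exact (properClusters_spec.1 h).2.1 rfl
  conv_lhs => rw [hs]
  rw [Finset.card_insert_of_notMem hnotmem, Finset.card_union_of_disjoint hdisj, himcard]
  ring

theorem two_le_children_univ {H : Finset (Finset X)} (hH : IsHierarchy H)
    (hn : 2 ≤ Fintype.card X) : 2 ≤ (childrenF H Finset.univ).card := by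
  classical
  have hc : 2 ≤ (Finset.univ : Finset X).card := by rwa [Finset.card_univ]
  have hX : Nonempty X := Fintype.card_pos_iff.1 (by omega)
  obtain ⟨x⟩ := hX
  obtain ⟨Y₁, hY₁, hxY₁⟩ := exists_child_elt hH hH.1 hc (Finset.mem_univ x)
  have hY₁ss : Y₁ ⊂ Finset.univ := (mem_childrenF.1 hY₁).2.2.1
  obtain ⟨y, _, hy⟩ := Finset.exists_of_ssubset hY₁ss
  obtain ⟨Y₂, hY₂, hyY₂⟩ := exists_child_elt hH hH.1 hc (Finset.mem_univ y)
  refine Finset.one_lt_card.2 ⟨Y₁, hY₁, Y₂, hY₂, ?_⟩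
  intro h
  exact hy (h ▸ hyY₂)

theorem sum_proper_children_le {H : Finset (Finset X)} (hH : IsHierarchy H)
    (hn : 2 ≤ Fintype.card X) :
    ∑ Z ∈ properClusters H, ((childrenF H Z).card - 1) ≤ Fintype.card X - 2 := by
  classical
  have h1 := sum_children_card hH
  rw [filter_two_le hH hn] at h1
  have hnotmem : Finset.univ ∉ properClusters H := fun h => (properClusters_spec.1 h).2.1 rfl
  rw [Finset.sum_insert hnotmem] at h1
  rw [card_hierarchy hH hn] at h1
  have h2 := two_le_children_univ hH hn
  have h3 : ∑ Z ∈ properClusters H, (childrenF H Z).card =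
      ∑ Z ∈ properClusters H, (((childrenF H Z).card - 1) + 1) := by
    refine Finset.sum_congr rfl fun Z hZ => ?_
    have hZ' := properClusters_spec.1 hZ
    have := childrenF_nonempty hH hZ'.1 (by omega)
    have := Finset.card_pos.2 this
    omega
  rw [h3, Finset.sum_add_distrib, Finset.sum_const, smul_eq_mul, mul_one] at h1
  omega

theorem pow_sum_bound {α : Type*} (s : Finset α) (g : α → ℕ) :
    ∑ i ∈ s, (2 ^ g i - 1) ≤ 2 ^ (∑ i ∈ s, g i) - 1 := by
  classical
  induction s using Finset.induction_on with
  | empty => simp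
  | insert _ _ hx ih =>
    rename_i a s
    rw [Finset.sum_insert hx, Finset.sum_insert hx]
    have h1 : 1 ≤ 2 ^ g a := Nat.one_le_two_pow
    have h2 : 1 ≤ 2 ^ (∑ i ∈ s, g i) := Nat.one_le_two_pow
    have h3 : 2 ^ (g a + ∑ i ∈ s, g i) = 2 ^ g a * 2 ^ (∑ i ∈ s, g i) := pow_add 2 _ _
    have h4 : 2 ^ g a + 2 ^ (∑ i ∈ s, g i) ≤ 2 ^ g a * 2 ^ (∑ i ∈ s, g i) + 1 := by
      nlinarith
    omega

theorem family_sum_bound {H : Finset (Finset X)} (hH : IsHierarchy H)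
    (hn : 2 ≤ Fintype.card X) :
    ∑ Z ∈ properClusters H, (2 ^ ((childrenF H Z).card - 1) - 1) ≤
      2 ^ (Fintype.card X - 2) - 1 := by
  calc ∑ Z ∈ properClusters H, (2 ^ ((childrenF H Z).card - 1) - 1)
      ≤ 2 ^ (∑ Z ∈ properClusters H, ((childrenF H Z).card - 1)) - 1 :=
        pow_sum_bound _ _
    _ ≤ 2 ^ (Fintype.card X - 2) - 1 := by
        have := sum_proper_children_le hH hn
        have hm := Nat.pow_le_pow_right (by norm_num : 1 ≤ 2) this
        omega

end HPAux
namespace HPAux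
set_option linter.unusedSectionVars false

variable {X : Type*} [DecidableEq X] [Fintype X]

def bindAt (H : Finset (Finset X)) (Z U : Finset X) : Finset (Finset X) :=
  insert U (insert (Z \ U) (H.erase Z))

def GoodU (H : Finset (Finset X)) (Z U : Finset X) : Prop :=
  U ⊆ Z ∧ U.Nonempty ∧ U ≠ Z ∧ ∀ Y, IsMaxSub H Y Z → Y ⊆ U ∨ Y ∩ U = ∅

theorem mem_bindAt {H : Finset (Finset X)} {Z U A : Finset X} :
    A ∈ bindAt H Z U ↔ A = U ∨ A = Z \ U ∨ (A ∈ H ∧ A ≠ Z) := by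
  simp [bindAt, Finset.mem_insert, Finset.mem_erase, and_comm]

theorem goodU_compl_nonempty {H : Finset (Finset X)} {Z U : Finset X} (h : GoodU H Z U) : (Z \ U).Nonempty := by
  rw [Finset.sdiff_nonempty]
  intro hsub
  exact h.2.2.1 (Finset.Subset.antisymm h.1 hsub)

theorem goodU_compl {H : Finset (Finset X)} {Z U : Finset X} (h : GoodU H Z U) :
    GoodU H Z (Z \ U) := by
  refine ⟨Finset.sdiff_subset, goodU_compl_nonempty h, ?_, ?_⟩
  · intro heq
    obtain ⟨x, hx⟩ := h.2.1
    have : x ∈ Z := h.1 hx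
    rw [← heq] at this
    exact (Finset.mem_sdiff.1 this).2 hx
  · intro Y hY
    rcases h.2.2.2 Y hY with hsub | hdis
    · right
      rw [Finset.eq_empty_iff_forall_notMem]
      intro x hx
      rw [Finset.mem_inter, Finset.mem_sdiff] at hx
      exact hx.2.2 (hsub hx.1)
    · left
      intro x hx
      rw [Finset.mem_sdiff]
      refine ⟨hY.2.2.1.subset hx, fun hxU => ?_⟩
      rw [Finset.eq_empty_iff_forall_notMem] at hdis
      exact hdis x (Finset.mem_inter.2 ⟨hx, hxU⟩)

theorem goodU_exists_child {H : Finset (Finset X)} (hH : IsHierarchy H) {Z U : Finset X}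
    (hZ : Z ∈ H) (hcard : 2 ≤ Z.card) (h : GoodU H Z U) :
    ∃ Y, IsMaxSub H Y Z ∧ Y ⊆ U := by
  obtain ⟨x, hx⟩ := h.2.1
  obtain ⟨Y, hY, hxY⟩ := exists_maxsub_elt hH hZ hcard (h.1 hx)
  refine ⟨Y, hY, ?_⟩
  rcases h.2.2.2 Y hY with hsub | hdis
  · exact hsub
  · exfalso
    rw [Finset.eq_empty_iff_forall_notMem] at hdis
    exact hdis x (Finset.mem_inter.2 ⟨hxY, hx⟩)

theorem Z_not_mem_bindAt {H : Finset (Finset X)} {Z U : Finset X} (h : GoodU H Z U) :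
    Z ∉ bindAt H Z U := by
  rw [mem_bindAt]
  rintro (rfl | heq | ⟨_, hne⟩)
  · exact h.2.2.1 rfl
  · obtain ⟨x, hx⟩ := h.2.1
    have hxZ : x ∈ Z := h.1 hx
    rw [heq] at hxZ
    exact (Finset.mem_sdiff.1 hxZ).2 hx
  · exact hne rfl

theorem bindAt_ne {H : Finset (Finset X)} {Z U : Finset X} (h : GoodU H Z U) (hZ : Z ∈ H) :
    bindAt H Z U ≠ H := fun he => Z_not_mem_bindAt h (he.symm ▸ hZ)

theorem bindAt_compl {H : Finset (Finset X)} {Z U : Finset X} (hU : U ⊆ Z) :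
    bindAt H Z (Z \ U) = bindAt H Z U := by
  unfold bindAt
  rw [Finset.sdiff_sdiff_eq_self hU, Finset.insert_comm]

/-- if C ∈ H is not Z itself, it is compatible with U -/
theorem goodU_compat {H : Finset (Finset X)} (hH : IsHierarchy H) {Z U C : Finset X}
    (hZ : Z ∈ H) (h : GoodU H Z U) (hC : C ∈ H) (hne : C ≠ Z) :
    U ∩ C = ∅ ∨ U ⊆ C ∨ C ⊆ U := by
  rcases hH.2.2.2 Z hZ C hC with hdis | hsub | hsub
  · left
    rw [Finset.eq_empty_iff_forall_notMem] at hdis ⊢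
    intro x hx
    rw [Finset.mem_inter] at hx
    exact hdis x (Finset.mem_inter.2 ⟨h.1 hx.1, hx.2⟩)
  · right; left; exact h.1.trans hsub
  · -- C ⊆ Z, C ≠ Z so C ⊂ Z; C inside a child
    have hCZ : C ⊂ Z := Finset.ssubset_iff_subset_ne.2 ⟨hsub, hne⟩
    obtain ⟨Y, hY, hCY⟩ := exists_maxsub hZ hC hCZ
    rcases h.2.2.2 Y hY with hsub' | hdis
    · right; right; exact hCY.trans hsub'
    · left
      rw [Finset.eq_empty_iff_forall_notMem] at hdis ⊢
      intro x hx
      rw [Finset.mem_inter] at hx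
      exact hdis x (Finset.mem_inter.2 ⟨hCY hx.2, hx.1⟩)

theorem bindAt_isHierarchy {H : Finset (Finset X)} (hH : IsHierarchy H) {Z U : Finset X}
    (hZp : Z ∈ properClusters H) (h : GoodU H Z U) : IsHierarchy (bindAt H Z U) := by
  obtain ⟨hZ, hZu, hZc⟩ := properClusters_spec.1 hZp
  have hcompl := goodU_compl h
  refine ⟨?_, ?_, ?_, ?_⟩
  · rw [mem_bindAt]
    exact Or.inr (Or.inr ⟨hH.1, fun he => hZu he.symm⟩)
  · intro x
    rw [mem_bindAt]
    refine Or.inr (Or.inr ⟨hH.2.1 x, fun he => ?_⟩)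
    rw [← he] at hZc
    simp at hZc
  · intro A hA
    rcases mem_bindAt.1 hA with rfl | rfl | ⟨hAH, _⟩
    · exact h.2.1
    · exact goodU_compl_nonempty h
    · exact mem_nonempty hH hAH
  · intro A hA B hB
    have key : ∀ C, C ∈ H → C ≠ Z → ∀ W, GoodU H Z W → W ∩ C = ∅ ∨ W ⊆ C ∨ C ⊆ W := by
      intro C hC hne W hW
      exact goodU_compat hH hZ hW hC hne
    rcases mem_bindAt.1 hA with hA' | hA' | ⟨hAH, hAne⟩ <;>
      rcases mem_bindAt.1 hB with hB' | hB' | ⟨hBH, hBne⟩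
    · rw [hA', hB']; exact Or.inr (Or.inl Finset.Subset.rfl)
    · rw [hA', hB']; exact Or.inl (Finset.inter_sdiff_self _ _)
    · rw [hA']
      rcases key B hBH hBne U h with h1 | h1 | h1
      exacts [Or.inl h1, Or.inr (Or.inl h1), Or.inr (Or.inr h1)]
    · rw [hA', hB']; exact Or.inl (Finset.sdiff_inter_self _ _)
    · rw [hA', hB']; exact Or.inr (Or.inl Finset.Subset.rfl)
    · rw [hA']
      rcases key B hBH hBne (Z \ U) hcompl with h1 | h1 | h1
      exacts [Or.inl h1, Or.inr (Or.inl h1), Or.inr (Or.inr h1)]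
    · rw [hB']
      rcases key A hAH hAne U h with h1 | h1 | h1
      · exact Or.inl (by rw [Finset.inter_comm]; exact h1)
      · exact Or.inr (Or.inr h1)
      · exact Or.inr (Or.inl h1)
    · rw [hB']
      rcases key A hAH hAne (Z \ U) hcompl with h1 | h1 | h1
      · exact Or.inl (by rw [Finset.inter_comm]; exact h1)
      · exact Or.inr (Or.inr h1)
      · exact Or.inr (Or.inl h1)
    · exact hH.2.2.2 A hAH B hBH

theorem bindAt_le {H : Finset (Finset X)} (hH : IsHierarchy H) {Z U : Finset X}
    (hZp : Z ∈ properClusters H) (h : GoodU H Z U) : LeHP (bindAt H Z U) H := by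
  classical
  obtain ⟨hZ, hZu, hZc⟩ := properClusters_spec.1 hZp
  refine ⟨fun A => if A ∈ H then A else Z, ?_, ?_, ?_, ?_⟩
  · intro A _
    by_cases hAH : A ∈ H <;> simp [hAH, hZ]
  · intro x
    simp [hH.2.1 x]
  · intro A hA
    by_cases hAH : A ∈ H
    · simp [hAH]
    · simp only [hAH, if_false]
      rcases mem_bindAt.1 hA with rfl | rfl | ⟨hAH', _⟩
      · exact h.1
      · exact Finset.sdiff_subset
      · exact absurd hAH' hAH
  · intro A hA B hB hAB
    have hAneH : ∀ C, C ∈ bindAt H Z U → C ∉ H → (C = U ∨ C = Z \ U) := by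
      intro C hC hCH
      rcases mem_bindAt.1 hC with rfl | rfl | ⟨hCH', _⟩
      · exact Or.inl rfl
      · exact Or.inr rfl
      · exact absurd hCH' hCH
    by_cases hAH : A ∈ H <;> by_cases hBH : B ∈ H <;> simp only [hAH, hBH, if_true, if_false]
    · exact hAB
    · -- B ∈ {U, Z\U}: A ⊂ B ⊆ Z strictly
      rcases hAneH B hB hBH with hB' | hB' <;> rw [hB'] at hAB
      · exact hAB.trans_subset h.1
      · exact hAB.trans_subset Finset.sdiff_subset
    · -- A ∈ {U, Z\U}, B ∈ H: show Z ⊂ B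
      have hAgood : GoodU H Z A := by
        rcases hAneH A hA hAH with hA' | hA' <;> rw [hA']
        · exact h
        · exact goodU_compl h
      have hBne : B ≠ Z := by
        rintro rfl
        exact (Z_not_mem_bindAt h) hB
      have hAne : A.Nonempty := hAgood.2.1
      have hint : (B ∩ Z).Nonempty := by
        obtain ⟨x, hx⟩ := hAne
        exact ⟨x, Finset.mem_inter.2 ⟨hAB.subset hx, hAgood.1 hx⟩⟩
      rcases lam hH hBH hZ hint with hsub | hsub
      · exfalso
        have hBZ : B ⊂ Z := Finset.ssubset_iff_subset_ne.2 ⟨hsub, hBne⟩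
        obtain ⟨Y, hY, hBY⟩ := exists_maxsub hZ hBH hBZ
        have hAY : A ⊂ Y := hAB.trans_subset hBY
        rcases hAgood.2.2.2 Y hY with hsub' | hdis
        · exact (hAY.trans_subset hsub').ne rfl
        · obtain ⟨x, hx⟩ := hAne
          rw [Finset.eq_empty_iff_forall_notMem] at hdis
          exact hdis x (Finset.mem_inter.2 ⟨hAY.subset hx, hx⟩)
      · exact Finset.ssubset_iff_subset_ne.2 ⟨hsub, fun he => hBne he.symm⟩
    · -- both outside H: impossible
      exfalso
      rcases hAneH A hA hAH with hA' | hA' <;> rcases hAneH B hB hBH with hB' | hB' <;>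
        rw [hA', hB'] at hAB
      · exact hAB.ne rfl
      · obtain ⟨x, hx⟩ := h.2.1
        have := hAB.subset hx
        exact (Finset.mem_sdiff.1 this).2 hx
      · obtain ⟨x, hx⟩ := goodU_compl_nonempty h
        have := hAB.subset hx
        exact (Finset.mem_sdiff.1 hx).2 this
      · exact hAB.ne rfl

end HPAux
namespace HPAux
set_option linter.unusedSectionVars false
set_option maxHeartbeats 1000000

variable {X : Type*} [DecidableEq X] [Fintype X]

theorem main_construction {H T' : Finset (Finset X)} (hH : IsHierarchy H)
    (hT : IsHierarchy T') (hle : LeHP H T') (hne : H ≠ T') :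
    ∃ Z U, Z ∈ properClusters T' ∧ GoodU T' Z U ∧ LeHP H (bindAt T' Z U) := by
  classical
  obtain ⟨δ, hmem, hsing, hexp, hstrict⟩ := hle
  -- the criterion
  set Crit : Finset X → Prop := fun Z => Z ∉ H ∨ ∃ A ∈ H, A ⊂ Z ∧ δ A = Z with hCrit
  have hcritne : (T'.filter Crit).Nonempty := by
    by_contra hc
    rw [Finset.not_nonempty_iff_eq_empty, Finset.filter_eq_empty_iff] at hc
    have hTH : T' ⊆ H := by
      intro Z hZ
      have h2 := hc hZ
      simp only [hCrit] at h2
      push_neg at h2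
      exact h2.1
    have hAex : ∃ A ∈ H, A ∉ T' := by
      by_contra hall
      push_neg at hall
      exact hne (Finset.Subset.antisymm hall hTH)
    obtain ⟨A, hAH, hAT⟩ := hAex
    obtain ⟨x, hx⟩ := mem_nonempty hH hAH
    set SH := H.filter (fun B => x ∈ B) with hSH
    set ST := T'.filter (fun B => x ∈ B) with hST
    have hmaps : ∀ B ∈ SH, δ B ∈ ST := by
      intro B hB
      rw [hSH, Finset.mem_filter] at hB
      rw [hST, Finset.mem_filter]
      exact ⟨hmem B hB.1, hexp B hB.1 hB.2⟩
    have hinj : Set.InjOn δ SH := by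
      intro B₁ h1 B₂ h2 heq
      rw [hSH, Finset.coe_filter, Set.mem_setOf_eq] at h1 h2
      by_contra hne'
      have hint : (B₁ ∩ B₂).Nonempty := ⟨x, Finset.mem_inter.2 ⟨h1.2, h2.2⟩⟩
      rcases lam hH h1.1 h2.1 hint with hs | hs
      · exact (hstrict B₁ h1.1 B₂ h2.1 (Finset.ssubset_iff_subset_ne.2 ⟨hs, hne'⟩)).ne heq
      · exact (hstrict B₂ h2.1 B₁ h1.1
          (Finset.ssubset_iff_subset_ne.2 ⟨hs, fun h => hne' h.symm⟩)).ne heq.symm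
    have hcard1 : SH.card ≤ ST.card := Finset.card_le_card_of_injOn δ hmaps hinj
    have hsub : ST ⊂ SH := by
      rw [Finset.ssubset_iff_of_subset]
      · exact ⟨A, by rw [hSH, Finset.mem_filter]; exact ⟨hAH, hx⟩,
          by rw [hST, Finset.mem_filter]; exact fun h => hAT h.1⟩
      · intro B hB
        rw [hST, Finset.mem_filter] at hB
        rw [hSH, Finset.mem_filter]
        exact ⟨hTH hB.1, hB.2⟩
    exact absurd hcard1 (by have := Finset.card_lt_card hsub; omega)
  -- minimal critical cluster Z
  obtain ⟨Z, hZmem, hminc⟩ := (T'.filter Crit).exists_min_image (fun C => C.card) hcritne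
  rw [Finset.mem_filter] at hZmem
  obtain ⟨hZT, hZcrit⟩ := hZmem
  have hminlt : ∀ C ∈ T', C ⊂ Z → C ∈ H ∧ ∀ A ∈ H, A ⊂ C → δ A ≠ C := by
    intro C hC hCZ
    have hcard := Finset.card_lt_card hCZ
    have hnc : ¬ Crit C := by
      intro h
      have := hminc C (Finset.mem_filter.2 ⟨hC, h⟩)
      omega
    simp only [hCrit] at hnc
    push_neg at hnc
    exact ⟨hnc.1, fun A hA hss heq => hnc.2 A hA hss heq⟩
  -- Z is proper
  have hZu : Z ≠ Finset.univ := by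
    rintro rfl
    rcases hZcrit with h | ⟨A, hA, hss, heq⟩
    · exact h hH.1
    · exact delta_ne_univ ⟨hmem, hsing, hexp, hstrict⟩ hH.1 hA hss.ne heq
  have hZc : 2 ≤ Z.card := by
    by_contra hc
    have h1 : Z.card = 1 := by
      have := Finset.card_pos.2 (mem_nonempty hT hZT); omega
    obtain ⟨z, rfl⟩ := Finset.card_eq_one.1 h1
    rcases hZcrit with h | ⟨A, hA, hss, heq⟩
    · exact h (hH.2.1 z)
    · have h2 := Finset.card_lt_card hss
      have h3 := Finset.card_pos.2 (mem_nonempty hH hA)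
      rw [Finset.card_singleton] at h2
      omega
  have hZp : Z ∈ properClusters T' := properClusters_spec.2 ⟨hZT, hZu, hZc⟩
  -- facts about P = δ⁻¹(Z)
  have hPss : ∀ A ∈ H, δ A = Z → A ⊂ Z := by
    intro A hA heq
    refine Finset.ssubset_iff_subset_ne.2 ⟨heq ▸ hexp A hA, ?_⟩
    rintro rfl
    rcases hZcrit with h | ⟨A', hA', hss, heq'⟩
    · exact h hA
    · have := hstrict A' hA' A hA hss
      rw [heq, heq'] at this
      exact this.ne rfl
  have hPdis : ∀ A ∈ H, ∀ B ∈ H, δ A = Z → δ B = Z → A ≠ B → A ∩ B = ∅ := by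
    intro A hA B hB heqA heqB hneAB
    by_contra hint
    rcases lam hH hA hB (Finset.nonempty_iff_ne_empty.2 hint) with hs | hs
    · have := hstrict A hA B hB (Finset.ssubset_iff_subset_ne.2 ⟨hs, hneAB⟩)
      rw [heqA, heqB] at this; exact this.ne rfl
    · have := hstrict B hB A hA (Finset.ssubset_iff_subset_ne.2 ⟨hs, fun h => hneAB h.symm⟩)
      rw [heqA, heqB] at this; exact this.ne rfl
  have hchildH : ∀ Y, IsMaxSub T' Y Z → Y ∈ H := fun Y hY => (hminlt Y hY.1 hY.2.2.1).1
  -- choose U with the side condition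
  obtain ⟨U, hgood, hside⟩ : ∃ U, GoodU T' Z U ∧
      (∀ A ∈ H, δ A = Z → A ⊆ U ∨ A ∩ U = ∅) := by
    by_cases hP : ∃ A₀ ∈ H, δ A₀ = Z
    · obtain ⟨A₀, hA₀H, hA₀eq⟩ := hP
      have hA₀ss := hPss A₀ hA₀H hA₀eq
      by_cases hA₀Y : ∃ Y, IsMaxSub T' Y Z ∧ A₀ ⊆ Y
      · obtain ⟨Y, hY, hA₀Y'⟩ := hA₀Y
        refine ⟨Y, ⟨hY.2.2.1.subset, mem_nonempty hT hY.1, hY.2.2.1.ne, ?_⟩, ?_⟩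
        · intro Y' hY'
          by_cases hYY : Y' = Y
          · exact Or.inl (by rw [hYY])
          · exact Or.inr (maxsub_disjoint hT hY' hY hYY)
        · intro A hA heq
          have hYH : Y ∈ H := hchildH Y hY
          by_cases hint : (A ∩ Y).Nonempty
          · rcases lam hH hA hYH hint with hs | hs
            · exact Or.inl hs
            · -- Y ⊆ A; then A = A₀
              by_cases hAA : A = A₀
              · exact Or.inl (hAA ▸ hA₀Y')
              · exfalso
                obtain ⟨x, hx⟩ := mem_nonempty hH hA₀H
                have : x ∈ A ∩ A₀ := Finset.mem_inter.2 ⟨hs (hA₀Y' hx), hx⟩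
                rw [hPdis A hA A₀ hA₀H heq hA₀eq hAA] at this
                exact absurd this (Finset.notMem_empty x)
          · exact Or.inr (Finset.not_nonempty_iff_eq_empty.1 hint)
      · refine ⟨A₀, ⟨hA₀ss.subset, mem_nonempty hH hA₀H, hA₀ss.ne, ?_⟩, ?_⟩
        · intro Y hY
          have hYH : Y ∈ H := hchildH Y hY
          by_cases hint : (Y ∩ A₀).Nonempty
          · rcases lam hH hYH hA₀H hint with hs | hs
            · exact Or.inl hs
            · exact absurd ⟨Y, hY, hs⟩ hA₀Y
          · exact Or.inr (Finset.not_nonempty_iff_eq_empty.1 hint)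
        · intro A hA heq
          by_cases hAA : A = A₀
          · exact Or.inl (by rw [hAA])
          · exact Or.inr (hPdis A hA A₀ hA₀H heq hA₀eq hAA)
    · push_neg at hP
      obtain ⟨Y₀, hY₀⟩ := childrenF_nonempty hT hZT hZc
      rw [mem_childrenF] at hY₀
      refine ⟨Y₀, ⟨hY₀.2.2.1.subset, mem_nonempty hT hY₀.1, hY₀.2.2.1.ne, ?_⟩, ?_⟩
      · intro Y hY
        by_cases hYY : Y = Y₀
        · exact Or.inl (by rw [hYY])
        · exact Or.inr (maxsub_disjoint hT hY hY₀ hYY)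
      · intro A hA heq
        exact absurd heq (hP A hA)
  -- the HP map into the binding
  have hsubside : ∀ B ∈ H, δ B = Z → B ⊆ (if B ⊆ U then U else Z \ U) := by
    intro B hB heq
    split_ifs with hBU
    · exact hBU
    · rcases hside B hB heq with h | h
      · exact absurd h hBU
      · intro x hx
        rw [Finset.mem_sdiff]
        refine ⟨(hPss B hB heq).subset hx, fun hxU => ?_⟩
        have : x ∈ B ∩ U := Finset.mem_inter.2 ⟨hx, hxU⟩
        rw [h] at this
        exact absurd this (Finset.notMem_empty x)
  refine ⟨Z, U, hZp, hgood, ⟨fun A => if δ A = Z then (if A ⊆ U then U else Z \ U) else δ A,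
    ?_, ?_, ?_, ?_⟩⟩
  · intro A hA
    show (if δ A = Z then (if A ⊆ U then U else Z \ U) else δ A) ∈ bindAt T' Z U
    by_cases heq : δ A = Z
    · rw [if_pos heq]
      split_ifs
      · exact mem_bindAt.2 (Or.inl rfl)
      · exact mem_bindAt.2 (Or.inr (Or.inl rfl))
    · rw [if_neg heq]
      exact mem_bindAt.2 (Or.inr (Or.inr ⟨hmem A hA, heq⟩))
  · intro x
    have hxZ : ({x} : Finset X) ≠ Z := by
      intro h
      rw [← h] at hZc
      simp at hZc
    show (if δ {x} = Z then (if ({x} : Finset X) ⊆ U then U else Z \ U) else δ {x}) = {x}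
    rw [hsing x, if_neg hxZ]
  · intro A hA
    show A ⊆ (if δ A = Z then (if A ⊆ U then U else Z \ U) else δ A)
    by_cases heq : δ A = Z
    · rw [if_pos heq]
      exact hsubside A hA heq
    · rw [if_neg heq]
      exact hexp A hA
  · intro A hA B hB hAB
    have hstr := hstrict A hA B hB hAB
    show (if δ A = Z then (if A ⊆ U then U else Z \ U) else δ A) ⊂
      (if δ B = Z then (if B ⊆ U then U else Z \ U) else δ B)
    by_cases heqA : δ A = Z
    case pos =>
      by_cases heqB : δ B = Z
      case pos =>
        exfalso
        rw [heqA, heqB] at hstr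
        exact hstr.ne rfl
      case neg =>
        rw [if_pos heqA, if_neg heqB]
        rw [heqA] at hstr
        have hUZ : (if A ⊆ U then U else Z \ U) ⊆ Z := by
          split_ifs
          · exact hgood.1
          · exact Finset.sdiff_subset
        exact hUZ.trans_ssubset hstr
    case neg =>
      by_cases heqB : δ B = Z
      case neg =>
        rw [if_neg heqA, if_neg heqB]
        exact hstr
      rw [if_neg heqA, if_pos heqB]
      rw [heqB] at hstr
      obtain ⟨Yc, hYc, hδAYc⟩ := exists_maxsub hZT (hmem A hA) hstr
      have hBside := hsubside B hB heqB
      have claim : ∀ Sd, GoodU T' Z Sd → B ⊆ Sd → δ A ⊂ Sd := by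
        intro Sd hSd hBSd
        have hAne : A.Nonempty := mem_nonempty hH hA
        obtain ⟨x, hx⟩ := hAne
        have hxYc : x ∈ Yc := hδAYc (hexp A hA hx)
        have hxSd : x ∈ Sd := hBSd (hAB.subset hx)
        have hYcSd : Yc ⊆ Sd := by
          rcases hSd.2.2.2 Yc hYc with h | h
          · exact h
          · exfalso
            have : x ∈ Yc ∩ Sd := Finset.mem_inter.2 ⟨hxYc, hxSd⟩
            rw [h] at this
            exact absurd this (Finset.notMem_empty x)
        refine Finset.ssubset_iff_subset_ne.2 ⟨hδAYc.trans hYcSd, ?_⟩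
        intro heqSd
        have hYceq : Yc = δ A := Finset.Subset.antisymm (heqSd ▸ hYcSd) hδAYc
        have hAYc : A ⊆ Yc := hYceq ▸ hexp A hA
        by_cases hAeqYc : A = Yc
        · -- B between: A ⊂ B ⊆ Sd = δ A = Yc = A
          have : B ⊆ A := by
            rw [hAeqYc, hYceq, heqSd]
            exact hBSd
          exact hAB.not_subset this
        · exact (hminlt Yc hYc.1 hYc.2.2.1).2 A hA
            (Finset.ssubset_iff_subset_ne.2 ⟨hAYc, hAeqYc⟩) hYceq.symm
      split_ifs with hBU
      · exact claim U hgood hBU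
      · refine claim (Z \ U) (goodU_compl hgood) ?_
        have := hsubside B hB heqB
        rwa [if_neg hBU] at this

/-- every hierarchy covered by T' is a binding of T' -/
theorem covered_eq_bindAt {H T' : Finset (Finset X)} (hT : IsHierarchy T')
    (hH : IsHierarchy H) (hcov : CoversHP H T') :
    ∃ Z U, Z ∈ properClusters T' ∧ GoodU T' Z U ∧ H = bindAt T' Z U := by
  obtain ⟨hle, hne, hmin⟩ := hcov
  obtain ⟨Z, U, hZp, hgood, hle'⟩ := main_construction hH hT hle hne
  have h1 : IsHierarchy (bindAt T' Z U) := bindAt_isHierarchy hT hZp hgood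
  have h2 : LeHP (bindAt T' Z U) T' := bindAt_le hT hZp hgood
  rcases hmin (bindAt T' Z U) h1 hle' h2 with h | h
  · exact ⟨Z, U, hZp, hgood, h.symm⟩
  · exact absurd (h ▸ Z_not_mem_bindAt hgood) (by
      simp only [not_not]
      exact absurd (mem_of_properClusters hZp) (h ▸ Z_not_mem_bindAt hgood))

end HPAux
namespace HPAux
set_option linter.unusedSectionVars false

variable {X : Type*} [DecidableEq X] [Fintype X]

noncomputable def Y0 (H : Finset (Finset X)) (Z : Finset X) : Finset X :=
  if h : (childrenF H Z).Nonempty then h.choose else ∅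

theorem Y0_mem {H : Finset (Finset X)} {Z : Finset X} (h : (childrenF H Z).Nonempty) :
    Y0 H Z ∈ childrenF H Z := by
  rw [Y0, dif_pos h]
  exact h.choose_spec

noncomputable def goodSet (H : Finset (Finset X)) (Z : Finset X) : Finset (Finset X) :=
  Z.powerset.filter (fun U => GoodU H Z U ∧ Y0 H Z ⊆ U)

theorem mem_goodSet {H : Finset (Finset X)} {Z U : Finset X} :
    U ∈ goodSet H Z ↔ GoodU H Z U ∧ Y0 H Z ⊆ U := by
  rw [goodSet, Finset.mem_filter, Finset.mem_powerset]
  exact ⟨fun h => h.2, fun h => ⟨h.1.1, h⟩⟩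

noncomputable def famZ (H : Finset (Finset X)) (Z : Finset X) : Finset (Finset (Finset X)) :=
  (goodSet H Z).image (bindAt H Z)

noncomputable def bindingFamily (H : Finset (Finset X)) : Finset (Finset (Finset X)) :=
  (properClusters H).biUnion (famZ H)

theorem covered_mem_bindingFamily {H T' : Finset (Finset X)} (hT : IsHierarchy T')
    (hH : IsHierarchy H) (hcov : CoversHP H T') : H ∈ bindingFamily T' := by
  obtain ⟨Z, U, hZp, hgood, heq⟩ := covered_eq_bindAt hT hH hcov
  obtain ⟨hZT, hZu, hZc⟩ := properClusters_spec.1 hZp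
  have hchne : (childrenF T' Z).Nonempty := childrenF_nonempty hT hZT hZc
  have hY0 := Y0_mem hchne
  rw [mem_childrenF] at hY0
  have hY0split : Y0 T' Z ⊆ U ∨ Y0 T' Z ⊆ Z \ U := by
    rcases hgood.2.2.2 _ hY0 with h | h
    · exact Or.inl h
    · right
      intro x hx
      rw [Finset.mem_sdiff]
      refine ⟨hY0.2.2.1.subset hx, fun hxU => ?_⟩
      have hmi : x ∈ Y0 T' Z ∩ U := Finset.mem_inter.2 ⟨hx, hxU⟩
      rw [h] at hmi
      exact absurd hmi (Finset.notMem_empty x)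
  rw [bindingFamily, Finset.mem_biUnion]
  refine ⟨Z, hZp, ?_⟩
  rw [famZ, Finset.mem_image]
  rcases hY0split with h | h
  · exact ⟨U, mem_goodSet.2 ⟨hgood, h⟩, heq.symm⟩
  · refine ⟨Z \ U, mem_goodSet.2 ⟨goodU_compl hgood, h⟩, ?_⟩
    rw [bindAt_compl hgood.1, heq]

theorem card_famZ_le {H : Finset (Finset X)} (hH : IsHierarchy H) {Z : Finset X}
    (hZp : Z ∈ properClusters H) :
    (famZ H Z).card ≤ 2 ^ ((childrenF H Z).card - 1) - 1 := by
  obtain ⟨hZ, hZu, hZc⟩ := properClusters_spec.1 hZp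
  have hchne : (childrenF H Z).Nonempty := childrenF_nonempty hH hZ hZc
  have hY0 := Y0_mem hchne
  have h1 : (famZ H Z).card ≤ (goodSet H Z).card := Finset.card_image_le
  set s := ((childrenF H Z).powerset.filter
    (fun S => Y0 H Z ∈ S ∧ S ≠ childrenF H Z)) with hss
  have hmems : ∀ S, S ∈ s ↔ (S ⊆ childrenF H Z ∧ Y0 H Z ∈ S ∧ S ≠ childrenF H Z) := by
    intro S
    rw [hss, Finset.mem_filter, Finset.mem_powerset]
  have h2 : (goodSet H Z).card ≤ s.card := by
    refine Finset.card_le_card_of_injOn (fun U => (childrenF H Z).filter (· ⊆ U)) ?_ ?_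
    · intro U hU
      obtain ⟨hgood, hY0U⟩ := mem_goodSet.1 hU
      rw [Finset.mem_coe, hmems]
      refine ⟨Finset.filter_subset _ _, Finset.mem_filter.2 ⟨hY0, hY0U⟩, ?_⟩
      intro hall
      have hall' : (childrenF H Z).filter (· ⊆ U) = childrenF H Z := hall
      have hZU : Z ⊆ U := by
        intro x hx
        obtain ⟨Y, hYc, hxY⟩ := exists_child_elt hH hZ hZc hx
        have hYf : Y ∈ (childrenF H Z).filter (· ⊆ U) := by rw [hall']; exact hYc
        exact (Finset.mem_filter.1 hYf).2 hxY
      exact hgood.2.2.1 (Finset.Subset.antisymm hgood.1 hZU)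
    · intro U₁ hU1 U₂ hU2 heqb
      have hU1' := mem_goodSet.1 hU1
      have hU2' := mem_goodSet.1 hU2
      have heq : (childrenF H Z).filter (· ⊆ U₁) = (childrenF H Z).filter (· ⊆ U₂) := heqb
      have key : ∀ V₁ V₂ : Finset X, GoodU H Z V₁ →
          (childrenF H Z).filter (· ⊆ V₁) = (childrenF H Z).filter (· ⊆ V₂) →
          V₁ ⊆ V₂ := by
        intro V₁ V₂ hg1 hfeq x hx
        obtain ⟨Y, hYc, hxY⟩ := exists_child_elt hH hZ hZc (hg1.1 hx)
        have hYU1 : Y ⊆ V₁ := by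
          rcases hg1.2.2.2 Y (mem_childrenF.1 hYc) with h | h
          · exact h
          · exfalso
            have hmi : x ∈ Y ∩ V₁ := Finset.mem_inter.2 ⟨hxY, hx⟩
            rw [h] at hmi
            exact absurd hmi (Finset.notMem_empty x)
        have hmem3 : Y ∈ (childrenF H Z).filter (· ⊆ V₂) := by
          rw [← hfeq]
          exact Finset.mem_filter.2 ⟨hYc, hYU1⟩
        exact (Finset.mem_filter.1 hmem3).2 hxY
      exact Finset.Subset.antisymm (key U₁ U₂ hU1'.1 heq) (key U₂ U₁ hU2'.1 heq.symm)
  have h3 : s.card ≤ 2 ^ ((childrenF H Z).card - 1) - 1 := by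
    set t := (((childrenF H Z).erase (Y0 H Z)).powerset.erase
      ((childrenF H Z).erase (Y0 H Z))) with hts
    have h4 : s.card ≤ t.card := by
      refine Finset.card_le_card_of_injOn (fun S => S.erase (Y0 H Z)) ?_ ?_
      · intro S hS
        obtain ⟨hSsub, hY0S, hSne⟩ := (hmems S).1 hS
        rw [hts, Finset.mem_coe, Finset.mem_erase, Finset.mem_powerset]
        refine ⟨?_, Finset.erase_subset_erase _ hSsub⟩
        intro heq'
        apply hSne
        apply Finset.Subset.antisymm hSsub
        intro Y hY
        by_cases hYY : Y = Y0 H Z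
        · exact hYY ▸ hY0S
        · have hYe : Y ∈ (childrenF H Z).erase (Y0 H Z) := Finset.mem_erase.2 ⟨hYY, hY⟩
          rw [← heq'] at hYe
          exact (Finset.mem_erase.1 hYe).2
      · intro S₁ hS1 S₂ hS2 heqb
        have hS1' := (hmems S₁).1 hS1
        have hS2' := (hmems S₂).1 hS2
        have heq' : S₁.erase (Y0 H Z) = S₂.erase (Y0 H Z) := heqb
        have e1 : S₁ = insert (Y0 H Z) (S₁.erase (Y0 H Z)) :=
          (Finset.insert_erase hS1'.2.1).symm
        have e2 : S₂ = insert (Y0 H Z) (S₂.erase (Y0 H Z)) :=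
          (Finset.insert_erase hS2'.2.1).symm
        rw [e1, e2, heq']
    have h5 : ((childrenF H Z).erase (Y0 H Z)) ∈
        ((childrenF H Z).erase (Y0 H Z)).powerset := Finset.mem_powerset_self _
    have h6 : t.card = 2 ^ ((childrenF H Z).card - 1) - 1 := by
      rw [hts, Finset.card_erase_of_mem h5, Finset.card_powerset,
        Finset.card_erase_of_mem hY0]
    omega
  omega

theorem downNbhd_subset_family {T' : Finset (Finset X)} (hT : IsHierarchy T') :
    downNbhd T' ⊆ ↑(bindingFamily T') := by
  rintro H ⟨hH, hcov⟩
  exact covered_mem_bindingFamily hT hH hcov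

theorem part2 {T' : Finset (Finset X)} (hT : IsHierarchy T') (hn : 2 ≤ Fintype.card X) :
    (downNbhd T').ncard ≤ 2 ^ (Fintype.card X - 2) - 1 := by
  have h1 : (downNbhd T').ncard ≤ (bindingFamily T').card := by
    have h2 := Set.ncard_le_ncard (downNbhd_subset_family hT) (Finset.finite_toSet _)
    rwa [Set.ncard_coe_finset] at h2
  have h3 : (bindingFamily T').card ≤
      ∑ Z ∈ properClusters T', (2 ^ ((childrenF T' Z).card - 1) - 1) := by
    refine (Finset.card_biUnion_le).trans ?_
    exact Finset.sum_le_sum fun Z hZ => card_famZ_le hT hZ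
  exact h1.trans (h3.trans (family_sum_bound hT hn))

end HPAux
namespace HPAux
set_option linter.unusedSectionVars false
set_option maxHeartbeats 1000000

variable {X : Type*} [DecidableEq X] [Fintype X]

section PartOne

variable {T : Finset (Finset X)} {a : X}

theorem E_proper (hP : properClusters T = {Finset.univ.erase a}) :
    Finset.univ.erase a ∈ properClusters T := by
  rw [hP]; exact Finset.mem_singleton_self _

theorem E_card : (Finset.univ.erase a).card = Fintype.card X - 1 := by
  rw [Finset.card_erase_of_mem (Finset.mem_univ a), Finset.card_univ]

theorem mem_T_classify (hT : IsHierarchy T) (hP : properClusters T = {Finset.univ.erase a})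
    {A : Finset X} (hA : A ∈ T) :
    A = Finset.univ ∨ (∃ x, A = {x}) ∨ A = Finset.univ.erase a := by
  have hs := hierarchy_structure hT
  rw [hs, hP] at hA
  simp only [Finset.mem_insert, Finset.mem_union, Finset.mem_image,
    Finset.mem_singleton] at hA
  rcases hA with h | ⟨x, _, h⟩ | h
  · exact Or.inl h
  · exact Or.inr (Or.inl ⟨x, h.symm⟩)
  · exact Or.inr (Or.inr h)

theorem not_univ_subset_erase {U : Finset X} (hU : U ⊆ Finset.univ.erase a) :
    U ≠ Finset.univ := by
  intro h
  have : a ∈ U := h ▸ Finset.mem_univ a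
  exact (Finset.mem_erase.1 (hU this)).1 rfl

/-- the children of E in T are exactly the singletons of elements of E -/
theorem maxsub_E_iff (hn : 3 ≤ Fintype.card X) (hT : IsHierarchy T)
    (hP : properClusters T = {Finset.univ.erase a}) {Y : Finset X} :
    IsMaxSub T Y (Finset.univ.erase a) ↔ ∃ y ∈ Finset.univ.erase a, Y = {y} := by
  have hEc2 : 2 ≤ (Finset.univ.erase a).card := by
    rw [E_card]; omega
  have hET : Finset.univ.erase a ∈ T := mem_of_properClusters (E_proper hP)
  constructor
  · rintro ⟨hY, _, hYss, _⟩
    rcases mem_T_classify hT hP hY with h | ⟨x, rfl⟩ | h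
    · exfalso
      rw [h] at hYss
      exact (Finset.mem_erase.1 (hYss.subset (Finset.mem_univ a))).1 rfl
    · exact ⟨x, hYss.subset (Finset.mem_singleton_self x), rfl⟩
    · exact absurd h (by rintro rfl; exact hYss.ne rfl)
  · rintro ⟨y, hy, rfl⟩
    refine ⟨hT.2.1 y, hET, singleton_ssubset hEc2 hy, ?_⟩
    intro C hC hCC
    obtain ⟨h1, h2⟩ := hCC
    have hCc : 2 ≤ C.card := by
      have := Finset.card_lt_card h1
      rw [Finset.card_singleton] at this
      omega
    rcases mem_T_classify hT hP hC with h | ⟨x, rfl⟩ | h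
    · rw [h] at h2
      exact (Finset.mem_erase.1 (h2.subset (Finset.mem_univ a))).1 rfl
    · rw [Finset.card_singleton] at hCc; omega
    · rw [h] at h2; exact h2.ne rfl

/-- any hierarchy G ≤ T has all proper clusters mapping to E -/
theorem leT_props (hn : 3 ≤ Fintype.card X) (hT : IsHierarchy T)
    (hP : properClusters T = {Finset.univ.erase a}) {G : Finset (Finset X)}
    (hG : IsHierarchy G) (hle : LeHP G T) :
    (∀ C ∈ properClusters G, C ⊆ Finset.univ.erase a) ∧
    (∀ C ∈ properClusters G, ∀ C' ∈ properClusters G, C ≠ C' → C ∩ C' = ∅) := by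
  obtain ⟨δ, hδ⟩ := hle
  have hmapE : ∀ C ∈ properClusters G, δ C = Finset.univ.erase a := by
    intro C hC
    obtain ⟨hCG, hCu, hCc⟩ := properClusters_spec.1 hC
    have h1 : δ C ∈ T := hδ.1 C hCG
    have h2 : C ⊆ δ C := hδ.2.2.1 C hCG
    have h3 : δ C ≠ Finset.univ := delta_ne_univ hδ hG.1 hCG hCu
    have h4 : 1 < (δ C).card := lt_of_lt_of_le hCc (Finset.card_le_card h2)
    have : δ C ∈ properClusters T := properClusters_spec.2 ⟨h1, h3, h4⟩
    rw [hP] at this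
    exact Finset.mem_singleton.1 this
  refine ⟨fun C hC => (hmapE C hC) ▸ hδ.2.2.1 C (mem_of_properClusters hC), ?_⟩
  intro C hC C' hC' hne
  by_contra hint
  rcases lam hG (mem_of_properClusters hC) (mem_of_properClusters hC')
      (Finset.nonempty_iff_ne_empty.2 hint) with hs | hs
  · have := hδ.2.2.2 C (mem_of_properClusters hC) C' (mem_of_properClusters hC')
      (Finset.ssubset_iff_subset_ne.2 ⟨hs, hne⟩)
    rw [hmapE C hC, hmapE C' hC'] at this
    exact this.ne rfl
  · have := hδ.2.2.2 C' (mem_of_properClusters hC') C (mem_of_properClusters hC)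
      (Finset.ssubset_iff_subset_ne.2 ⟨hs, fun h => hne h.symm⟩)
    rw [hmapE C hC, hmapE C' hC'] at this
    exact this.ne rfl

theorem mem_properClusters_bind (hT : IsHierarchy T)
    (hP : properClusters T = {Finset.univ.erase a}) {U A : Finset X}
    (hgood : GoodU T (Finset.univ.erase a) U) :
    A ∈ properClusters (bindAt T (Finset.univ.erase a) U) ↔
      ((A = U ∨ A = Finset.univ.erase a \ U) ∧ 1 < A.card) := by
  rw [properClusters_spec, mem_bindAt]
  constructor
  · rintro ⟨h1 | h1 | ⟨hAT, hAne⟩, h2, h3⟩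
    · exact ⟨Or.inl h1, h3⟩
    · exact ⟨Or.inr h1, h3⟩
    · exfalso
      rcases mem_T_classify hT hP hAT with h | ⟨x, rfl⟩ | h
      · exact h2 h
      · rw [Finset.card_singleton] at h3; omega
      · exact hAne h
  · rintro ⟨h1 | h1, h2⟩
    · subst h1
      exact ⟨Or.inl rfl, not_univ_subset_erase hgood.1, h2⟩
    · subst h1
      exact ⟨Or.inr (Or.inl rfl),
        not_univ_subset_erase (Finset.sdiff_subset.trans (Finset.Subset.refl _)), h2⟩

end PartOne
end HPAux
namespace HPAux
set_option linter.unusedSectionVars false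
set_option maxHeartbeats 1000000

variable {X : Type*} [DecidableEq X] [Fintype X]

section PartOneB

variable {T : Finset (Finset X)} {a : X}

theorem bind_minimal (hn : 3 ≤ Fintype.card X) (hT : IsHierarchy T)
    (hP : properClusters T = {Finset.univ.erase a}) {U : Finset X}
    (hgood : GoodU T (Finset.univ.erase a) U) {G : Finset (Finset X)}
    (hG : IsHierarchy G) (hle1 : LeHP (bindAt T (Finset.univ.erase a) U) G)
    (hle2 : LeHP G T) :
    G = bindAt T (Finset.univ.erase a) U ∨ G = T := by
  classical
  set E := Finset.univ.erase a with hE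
  obtain ⟨hsubE, hdisj⟩ := leT_props hn hT hP hG hle2
  set V := E \ U with hV
  have hEp : E ∈ properClusters T := E_proper hP
  obtain ⟨hET, hEu, hEc⟩ := properClusters_spec.1 hEp
  have hbindH : IsHierarchy (bindAt T E U) := bindAt_isHierarchy hT hEp hgood
  have hUV : U ∪ V = E := by
    rw [hV, Finset.union_sdiff_of_subset hgood.1]
  have hUVdisj : ∀ x, x ∈ U → x ∈ V → False := by
    intro x h1 h2
    exact (Finset.mem_sdiff.1 h2).2 h1
  have hUmem : U ∈ bindAt T E U := mem_bindAt.2 (Or.inl rfl)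
  have hVmem : V ∈ bindAt T E U := mem_bindAt.2 (Or.inr (Or.inl rfl))
  have hUne : U ≠ Finset.univ := not_univ_subset_erase hgood.1
  have hVne : V ≠ Finset.univ := not_univ_subset_erase Finset.sdiff_subset
  have hVnonempty : V.Nonempty := goodU_compl_nonempty hgood
  obtain ⟨δ₂, hδ₂⟩ := hle1
  -- if E is a proper cluster of G then G = T
  by_cases hEG : E ∈ properClusters G
  · right
    refine hierarchy_ext hG hT ?_
    rw [hP]
    ext C
    rw [Finset.mem_singleton]
    constructor
    · intro hC
      by_contra hne
      have hdis := hdisj C hC E hEG hne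
      obtain ⟨x, hx⟩ := mem_nonempty hG (mem_of_properClusters hC)
      have : x ∈ C ∩ E := Finset.mem_inter.2 ⟨hx, hsubE C hC hx⟩
      rw [hdis] at this
      exact absurd this (Finset.notMem_empty x)
    · rintro rfl
      exact hEG
  · left
    -- E is not a proper cluster of G; show properClusters G = properClusters (bindAt)
    have keyW : ∀ W₀ : Finset X, W₀ ∈ bindAt T E U → W₀ ≠ Finset.univ → 1 < W₀.card →
        δ₂ W₀ ∈ properClusters G ∧ W₀ ⊆ δ₂ W₀ := by
      intro W₀ hW₀ hW₀u hW₀c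
      have h1 : δ₂ W₀ ∈ G := hδ₂.1 W₀ hW₀
      have h2 : W₀ ⊆ δ₂ W₀ := hδ₂.2.2.1 W₀ hW₀
      have h3 : δ₂ W₀ ≠ Finset.univ := delta_ne_univ hδ₂ hbindH.1 hW₀ hW₀u
      have h4 : 1 < (δ₂ W₀).card := lt_of_lt_of_le hW₀c (Finset.card_le_card h2)
      exact ⟨properClusters_spec.2 ⟨h1, h3, h4⟩, h2⟩
    have hWnotE : ∀ W₀, W₀ ∈ properClusters G → W₀ ≠ E := by
      rintro W₀ hW₀ rfl
      exact hEG hW₀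
    refine hierarchy_ext hG hbindH ?_
    ext C
    rw [mem_properClusters_bind hT hP hgood, ← hE, ← hV]
    by_cases hUc : 1 < U.card
    · obtain ⟨hWp, hWsub⟩ := keyW U hUmem hUne hUc
      set W := δ₂ U with hW
      have hWE : W ⊆ E := hsubE W hWp
      by_cases hVc : 1 < V.card
      · -- both parts nonsingleton
        obtain ⟨hW'p, hW'sub⟩ := keyW V hVmem hVne hVc
        set W' := δ₂ V with hW'
        have hW'E : W' ⊆ E := hsubE W' hW'p
        have hWW' : W ≠ W' := by
          intro h
          apply hWnotE W hWp
          apply Finset.Subset.antisymm hWE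
          rw [← hUV]
          exact Finset.union_subset hWsub (h ▸ hW'sub)
        have hdisWW' := hdisj W hWp W' hW'p hWW'
        have hWU : W = U := by
          refine Finset.Subset.antisymm ?_ hWsub
          intro x hx
          have hxE : x ∈ E := hWE hx
          rw [← hUV, Finset.mem_union] at hxE
          rcases hxE with h | h
          · exact h
          · exfalso
            have : x ∈ W ∩ W' := Finset.mem_inter.2 ⟨hx, hW'sub h⟩
            rw [hdisWW'] at this
            exact absurd this (Finset.notMem_empty x)
        have hW'V : W' = V := by
          refine Finset.Subset.antisymm ?_ hW'sub
          intro x hx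
          have hxE : x ∈ E := hW'E hx
          rw [← hUV, Finset.mem_union] at hxE
          rcases hxE with h | h
          · exfalso
            have : x ∈ W ∩ W' := Finset.mem_inter.2 ⟨hWU ▸ h, hx⟩
            rw [hdisWW'] at this
            exact absurd this (Finset.notMem_empty x)
          · exact h
        constructor
        · intro hC
          refine ⟨?_, (properClusters_spec.1 hC).2.2⟩
          by_cases h1 : C = U
          · exact Or.inl h1
          by_cases h2 : C = V
          · exact Or.inr h2
          exfalso
          have hd1 := hdisj C hC W hWp (fun h => h1 (h.trans hWU))
          have hd2 := hdisj C hC W' hW'p (fun h => h2 (h.trans hW'V))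
          obtain ⟨x, hx⟩ := mem_nonempty hG (mem_of_properClusters hC)
          have hxE : x ∈ E := hsubE C hC hx
          rw [← hUV, Finset.mem_union] at hxE
          rcases hxE with h | h
          · have : x ∈ C ∩ W := Finset.mem_inter.2 ⟨hx, hWU ▸ h⟩
            rw [hd1] at this
            exact absurd this (Finset.notMem_empty x)
          · have : x ∈ C ∩ W' := Finset.mem_inter.2 ⟨hx, hW'V ▸ h⟩
            rw [hd2] at this
            exact absurd this (Finset.notMem_empty x)
        · rintro ⟨h1 | h1, h2⟩
          · rw [h1]; exact hWU ▸ hWp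
          · rw [h1]; exact hW'V ▸ hW'p
      · -- V is a singleton
        have hWU : W = U := by
          refine Finset.Subset.antisymm ?_ hWsub
          intro x hx
          have hxE : x ∈ E := hWE hx
          rw [← hUV, Finset.mem_union] at hxE
          rcases hxE with h | h
          · exact h
          · exfalso
            -- then V ⊆ W, so W = E
            apply hWnotE W hWp
            refine Finset.Subset.antisymm hWE ?_
            rw [← hUV]
            refine Finset.union_subset hWsub ?_
            have hVcard : V.card = 1 := by
              have := Finset.card_pos.2 hVnonempty; omega
            obtain ⟨w, hw⟩ := Finset.card_eq_one.1 hVcard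
            rw [hw]
            rw [hw, Finset.mem_singleton] at h
            rw [Finset.singleton_subset_iff, ← h]
            exact hx
        constructor
        · intro hC
          refine ⟨?_, (properClusters_spec.1 hC).2.2⟩
          by_cases h1 : C = U
          · exact Or.inl h1
          exfalso
          have hd1 := hdisj C hC W hWp (fun h => h1 (h.trans hWU))
          obtain ⟨x, hx⟩ := mem_nonempty hG (mem_of_properClusters hC)
          have hxE : x ∈ E := hsubE C hC hx
          rw [← hUV, Finset.mem_union] at hxE
          rcases hxE with h | h
          · have : x ∈ C ∩ W := Finset.mem_inter.2 ⟨hx, hWU ▸ h⟩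
            rw [hd1] at this
            exact absurd this (Finset.notMem_empty x)
          · -- C ⊆ V would make C a singleton; show C ⊆ V
            have hCV : C ⊆ V := by
              intro y hy
              have hyE : y ∈ E := hsubE C hC hy
              rw [← hUV, Finset.mem_union] at hyE
              rcases hyE with h' | h'
              · exfalso
                have : y ∈ C ∩ W := Finset.mem_inter.2 ⟨hy, hWU ▸ h'⟩
                rw [hd1] at this
                exact absurd this (Finset.notMem_empty y)
              · exact h'
            have := Finset.card_le_card hCV
            have := (properClusters_spec.1 hC).2.2
            omega
        · rintro ⟨h1 | h1, h2⟩
          · rw [h1]; exact hWU ▸ hWp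
          · exfalso
            rw [h1] at h2
            omega
    · -- U is a singleton
      by_cases hVc : 1 < V.card
      · obtain ⟨hW'p, hW'sub⟩ := keyW V hVmem hVne hVc
        set W' := δ₂ V with hW'
        have hW'E : W' ⊆ E := hsubE W' hW'p
        have hW'V : W' = V := by
          refine Finset.Subset.antisymm ?_ hW'sub
          intro x hx
          have hxE : x ∈ E := hW'E hx
          rw [← hUV, Finset.mem_union] at hxE
          rcases hxE with h | h
          · exfalso
            apply hWnotE W' hW'p
            refine Finset.Subset.antisymm hW'E ?_
            rw [← hUV]
            refine Finset.union_subset ?_ hW'sub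
            have hUcard : U.card = 1 := by
              have := Finset.card_pos.2 hgood.2.1; omega
            obtain ⟨w, hw⟩ := Finset.card_eq_one.1 hUcard
            rw [hw]
            rw [hw, Finset.mem_singleton] at h
            rw [Finset.singleton_subset_iff, ← h]
            exact hx
          · exact h
        constructor
        · intro hC
          refine ⟨?_, (properClusters_spec.1 hC).2.2⟩
          by_cases h1 : C = V
          · exact Or.inr h1
          exfalso
          have hd1 := hdisj C hC W' hW'p (fun h => h1 (h.trans hW'V))
          obtain ⟨x, hx⟩ := mem_nonempty hG (mem_of_properClusters hC)
          have hxE : x ∈ E := hsubE C hC hx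
          rw [← hUV, Finset.mem_union] at hxE
          rcases hxE with h | h
          · have hCU : C ⊆ U := by
              intro y hy
              have hyE : y ∈ E := hsubE C hC hy
              rw [← hUV, Finset.mem_union] at hyE
              rcases hyE with h' | h'
              · exact h'
              · exfalso
                have : y ∈ C ∩ W' := Finset.mem_inter.2 ⟨hy, hW'V ▸ h'⟩
                rw [hd1] at this
                exact absurd this (Finset.notMem_empty y)
            have := Finset.card_le_card hCU
            have := (properClusters_spec.1 hC).2.2
            omega
          · have : x ∈ C ∩ W' := Finset.mem_inter.2 ⟨hx, hW'V ▸ h⟩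
            rw [hd1] at this
            exact absurd this (Finset.notMem_empty x)
        · rintro ⟨h1 | h1, h2⟩
          · exfalso
            rw [h1] at h2
            omega
          · rw [h1]; exact hW'V ▸ hW'p
      · -- both singletons: E has exactly two elements, properClusters G is empty
        have hEcard : E.card = 2 := by
          have h1 := Finset.card_pos.2 hgood.2.1
          have h2 := Finset.card_pos.2 hVnonempty
          have h3 : E.card = U.card + V.card := by
            rw [← hUV]
            rw [Finset.card_union_of_disjoint]
            rw [Finset.disjoint_left]
            intro x h1' h2'
            exact hUVdisj x h1' h2'
          omega
        constructor
        · intro hC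
          exfalso
          have h1 := hsubE C hC
          have h2 := (properClusters_spec.1 hC).2.2
          have h3 := Finset.card_le_card h1
          have hCE : C = E := Finset.eq_of_subset_of_card_le h1 (by omega)
          exact hWnotE C hC hCE
        · rintro ⟨h1 | h1, h2⟩ <;> rw [h1] at h2 <;> omega
  
theorem bind_covers (hn : 3 ≤ Fintype.card X) (hT : IsHierarchy T)
    (hP : properClusters T = {Finset.univ.erase a}) {U : Finset X}
    (hgood : GoodU T (Finset.univ.erase a) U) :
    CoversHP (bindAt T (Finset.univ.erase a) U) T := by
  have hEp := E_proper hP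
  refine ⟨bindAt_le hT hEp hgood, bindAt_ne hgood (mem_of_properClusters hEp), ?_⟩
  intro G hG hle1 hle2
  exact bind_minimal hn hT hP hgood hG hle1 hle2

end PartOneB
end HPAux
namespace HPAux
set_option linter.unusedSectionVars false
set_option maxHeartbeats 1000000

variable {X : Type*} [DecidableEq X] [Fintype X]

section PartOneC

variable {T : Finset (Finset X)} {a : X}

theorem downNbhd_T_eq (hn : 3 ≤ Fintype.card X) (hT : IsHierarchy T)
    (hP : properClusters T = {Finset.univ.erase a}) :
    downNbhd T = ↑(famZ T (Finset.univ.erase a)) := by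
  ext G
  constructor
  · rintro ⟨hG, hcov⟩
    have h := covered_mem_bindingFamily hT hG hcov
    rw [bindingFamily, hP, Finset.singleton_biUnion] at h
    exact h
  · intro hG
    rw [Finset.mem_coe, famZ, Finset.mem_image] at hG
    obtain ⟨U, hU, rfl⟩ := hG
    obtain ⟨hgood, _⟩ := mem_goodSet.1 hU
    exact ⟨bindAt_isHierarchy hT (E_proper hP) hgood, bind_covers hn hT hP hgood⟩

theorem exists_b0 (hn : 3 ≤ Fintype.card X) (hT : IsHierarchy T)
    (hP : properClusters T = {Finset.univ.erase a}) :
    ∃ b0 ∈ Finset.univ.erase a, Y0 T (Finset.univ.erase a) = {b0} := by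
  have hEp := E_proper hP
  obtain ⟨hET, hEu, hEc⟩ := properClusters_spec.1 hEp
  have hY0 := Y0_mem (childrenF_nonempty hT hET hEc)
  rw [mem_childrenF, maxsub_E_iff hn hT hP] at hY0
  obtain ⟨b0, hb0, h⟩ := hY0
  exact ⟨b0, hb0, h⟩

theorem mem_goodSet_T (hn : 3 ≤ Fintype.card X) (hT : IsHierarchy T)
    (hP : properClusters T = {Finset.univ.erase a}) {b0 : X}
    (hb0 : b0 ∈ Finset.univ.erase a) (hY0 : Y0 T (Finset.univ.erase a) = {b0})
    {U : Finset X} :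
    U ∈ goodSet T (Finset.univ.erase a) ↔
      (U ⊆ Finset.univ.erase a ∧ U ≠ Finset.univ.erase a ∧ b0 ∈ U) := by
  rw [mem_goodSet, hY0, Finset.singleton_subset_iff]
  constructor
  · rintro ⟨⟨h1, _, h3, _⟩, h5⟩
    exact ⟨h1, h3, h5⟩
  · rintro ⟨h1, h3, h5⟩
    refine ⟨⟨h1, ⟨b0, h5⟩, h3, ?_⟩, h5⟩
    intro Y hY
    rw [maxsub_E_iff hn hT hP] at hY
    obtain ⟨y, hy, rfl⟩ := hY
    by_cases hyU : y ∈ U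
    · exact Or.inl (Finset.singleton_subset_iff.2 hyU)
    · exact Or.inr (Finset.singleton_inter_of_notMem hyU)

theorem card_goodSet_T (hn : 3 ≤ Fintype.card X) (hT : IsHierarchy T)
    (hP : properClusters T = {Finset.univ.erase a}) :
    (goodSet T (Finset.univ.erase a)).card = 2 ^ (Fintype.card X - 2) - 1 := by
  classical
  obtain ⟨b0, hb0, hY0⟩ := exists_b0 hn hT hP
  set E := Finset.univ.erase a with hE
  set tgt := ((E.erase b0).powerset.erase (E.erase b0)) with htgt
  have hcard : (goodSet T E).card = tgt.card := by
    refine Finset.card_bij' (fun U _ => U.erase b0) (fun S _ => insert b0 S) ?_ ?_ ?_ ?_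
    · intro U hU
      obtain ⟨h1, h3, h5⟩ := (mem_goodSet_T hn hT hP hb0 hY0).1 hU
      rw [htgt, Finset.mem_erase, Finset.mem_powerset]
      refine ⟨?_, Finset.erase_subset_erase _ h1⟩
      intro heq
      have heq' : U.erase b0 = E.erase b0 := heq
      apply h3
      rw [← Finset.insert_erase h5, heq', Finset.insert_erase hb0]
    · intro S hS
      rw [htgt, Finset.mem_erase, Finset.mem_powerset] at hS
      obtain ⟨hSne, hSsub⟩ := hS
      rw [mem_goodSet_T hn hT hP hb0 hY0]
      have hb0S : b0 ∉ S := fun h => (Finset.mem_erase.1 (hSsub h)).1 rfl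
      refine ⟨Finset.insert_subset hb0 (hSsub.trans (Finset.erase_subset _ _)), ?_,
        Finset.mem_insert_self _ _⟩
      intro heq
      have heq' : insert b0 S = E := heq
      apply hSne
      rw [← Finset.erase_insert hb0S, heq']
    · intro U hU
      exact Finset.insert_erase ((mem_goodSet_T hn hT hP hb0 hY0).1 hU).2.2
    · intro S hS
      rw [htgt, Finset.mem_erase, Finset.mem_powerset] at hS
      have hb0S : b0 ∉ S := fun h => (Finset.mem_erase.1 (hS.2 h)).1 rfl
      exact Finset.erase_insert hb0S
  rw [hcard, htgt, Finset.card_erase_of_mem (Finset.mem_powerset_self _),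
    Finset.card_powerset, Finset.card_erase_of_mem hb0]
  rw [hE, E_card]
  have hnn : Fintype.card X - 1 - 1 = Fintype.card X - 2 := by omega
  rw [hnn]

theorem bind_injOn (hn : 3 ≤ Fintype.card X) (hT : IsHierarchy T)
    (hP : properClusters T = {Finset.univ.erase a}) :
    Set.InjOn (bindAt T (Finset.univ.erase a)) (goodSet T (Finset.univ.erase a)) := by
  obtain ⟨b0, hb0, hY0⟩ := exists_b0 hn hT hP
  intro U₁ hU1' U₂ hU2' heq
  have hU1 := Finset.mem_coe.1 hU1'
  have hU2 := Finset.mem_coe.1 hU2'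
  have hg1 : GoodU T (Finset.univ.erase a) U₁ := (mem_goodSet.1 hU1).1
  have hg2 : GoodU T (Finset.univ.erase a) U₂ := (mem_goodSet.1 hU2).1
  have hm1 : b0 ∈ U₁ := by
    have h := (mem_goodSet.1 hU1).2
    rw [hY0, Finset.singleton_subset_iff] at h
    exact h
  have hm2 : b0 ∈ U₂ := by
    have h := (mem_goodSet.1 hU2).2
    rw [hY0, Finset.singleton_subset_iff] at h
    exact h
  have hprop := congrArg properClusters heq
  have key : ∀ A : Finset X, ((A = U₁ ∨ A = Finset.univ.erase a \ U₁) ∧ 1 < A.card) ↔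
      ((A = U₂ ∨ A = Finset.univ.erase a \ U₂) ∧ 1 < A.card) := by
    intro A
    rw [← mem_properClusters_bind hT hP hg1, ← mem_properClusters_bind hT hP hg2, hprop]
  have hb0E1 : b0 ∉ Finset.univ.erase a \ U₁ := fun h => (Finset.mem_sdiff.1 h).2 hm1
  have hb0E2 : b0 ∉ Finset.univ.erase a \ U₂ := fun h => (Finset.mem_sdiff.1 h).2 hm2
  have hsingle : ∀ W : Finset X, b0 ∈ W → W.card = 1 → W = {b0} := by
    intro W hbW hcW
    obtain ⟨x, hx⟩ := Finset.card_eq_one.1 hcW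
    rw [hx] at hbW ⊢
    rw [Finset.mem_singleton] at hbW
    rw [hbW]
  by_cases h1 : 1 < U₁.card
  · rcases ((key U₁).1 ⟨Or.inl rfl, h1⟩).1 with h | h
    · exact h
    · exact absurd (h ▸ hm1) hb0E2
  · have hc1 : U₁.card = 1 := by
      have := Finset.card_pos.2 hg1.2.1; omega
    by_cases h2 : 1 < U₂.card
    · exfalso
      rcases ((key U₂).2 ⟨Or.inl rfl, h2⟩).1 with h | h
      · rw [h] at h2; omega
      · exact absurd (h ▸ hm2) hb0E1
    · have hc2 : U₂.card = 1 := by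
        have := Finset.card_pos.2 hg2.2.1; omega
      rw [hsingle U₁ hm1 hc1, hsingle U₂ hm2 hc2]

theorem part1 (hn : 3 ≤ Fintype.card X) (hT : IsHierarchy T)
    (hP : properClusters T = {Finset.univ.erase a}) :
    (downNbhd T).ncard = 2 ^ (Fintype.card X - 2) - 1 := by
  rw [downNbhd_T_eq hn hT hP, Set.ncard_coe_finset, famZ,
    Finset.card_image_of_injOn (bind_injOn hn hT hP), card_goodSet_T hn hT hP]

end PartOneC
end HPAux
/-- a tree whose only proper cluster is `X \ {a}` has down-neighbourhood of
size `S(n-1,2) = 2^(n-2) - 1`, the maximum down-neighbourhood size over all trees. -/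
theorem downNbhd_max (hn : 3 ≤ Fintype.card X) (a : X) (T : Finset (Finset X))
    (hT : IsHierarchy T) (hP : properClusters T = {Finset.univ.erase a}) :
    (downNbhd T).ncard = 2 ^ (Fintype.card X - 2) - 1 ∧
    ∀ T' : Finset (Finset X), IsHierarchy T' →
      (downNbhd T').ncard ≤ 2 ^ (Fintype.card X - 2) - 1 := by
  constructor
  · exact HPAux.part1 hn hT hP
  · intro T' hT'
    exact HPAux.part2 hT' (by omega)
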